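/- The coordinatewise order on ℕ^k is a well-quasi-order (Dickson's lemma), and consequently in any lossy counter machine, the set of configurations from which a given downward-closed set is reachable is itself determined by finitely many minimal excluded elements. -/

import Mathlib

/-- Order on counter-machine configurations: equal control state and
coordinatewise `≤` on the counters. -/
def cmLe {Q : Type*} {k : ℕ} (c c' : Q × (Fin k → ℕ)) : Prop :=
  c.1 = c'.1 ∧ ∀ i, c.2 i ≤ c'.2 i

/-- Dickson's lemma: the coordinatewise order on `ℕ^k` is a well-quasi-order.
Consequently, for any lossy counter machine (any step relation on
`Q × ℕ^k` that is downward-compatible), the set of configurations from which a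
given downward-closed set `G` is reachable has a complement which is the
upward closure of finitely many minimal excluded elements. -/
theorem dickson_and_lossy_reach {k : ℕ} {Q : Type*} [Finite Q] :
    (∀ f : ℕ → (Fin k → ℕ), ∃ i j, i < j ∧ ∀ m, f i m ≤ f j m) ∧
    ∀ step : (Q × (Fin k → ℕ)) → (Q × (Fin k → ℕ)) → Prop,
      (∀ c' c d, cmLe c' c → step c d →
        ∃ d', cmLe d' d ∧ Relation.ReflTransGen step c' d') →
      ∀ G : Set (Q × (Fin k → ℕ)),
        (∀ ⦃x y⦄, x ∈ G → cmLe y x → y ∈ G) →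
        ∃ B : Set (Q × (Fin k → ℕ)), B.Finite ∧
          {c | ¬ ∃ g ∈ G, Relation.ReflTransGen step c g} =
            {c | ∃ b ∈ B, cmLe b c} := by
  classical
  letI : PartialOrder Q :=
    { le := Eq
      le_refl := fun _ => rfl
      le_trans := fun _ _ _ (h : _ = _) (h' : _ = _) => h.trans h'
      le_antisymm := fun _ _ (h : _ = _) _ => h }
  have hle : ∀ c d : Q × (Fin k → ℕ), cmLe c d ↔ c ≤ d := by
    intro c d
    constructor
    · rintro ⟨h1, h2⟩; exact ⟨h1, h2⟩
    · rintro ⟨h1, h2⟩; exact ⟨h1, h2⟩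
  have dickson : ∀ f : ℕ → (Fin k → ℕ), ∃ i j, i < j ∧ ∀ m, f i m ≤ f j m := by
    intro f
    obtain ⟨i, j, hij, hle'⟩ := (wellQuasiOrdered_le (α := Fin k → ℕ)) f
    exact ⟨i, j, hij, fun m => hle' m⟩
  refine ⟨dickson, ?_⟩
  intro step hdc G hG
  -- the product order is a pwo
  have hpwo : (Set.univ : Set (Q × (Fin k → ℕ))).IsPWO := by
    have := (Set.isPWO_of_finite (s := (Set.univ : Set Q))).prod
      (Set.isPWO_of_wellQuasiOrderedLE (Set.univ : Set (Fin k → ℕ)))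
    rwa [Set.univ_prod_univ] at this
  -- the bad set U is upward closed
  set U : Set (Q × (Fin k → ℕ)) :=
    {c | ¬ ∃ g ∈ G, Relation.ReflTransGen step c g} with hUdef
  have hsim : ∀ b c d : Q × (Fin k → ℕ), cmLe b c →
      Relation.ReflTransGen step c d →
      ∃ d', cmLe d' d ∧ Relation.ReflTransGen step b d' := by
    intro b c d hbc hcd
    induction hcd with
    | refl => exact ⟨b, hbc, Relation.ReflTransGen.refl⟩
    | tail _ hstep ih =>
      obtain ⟨d', hd', hreach⟩ := ih
      obtain ⟨e', he', hreach'⟩ := hdc d' _ _ hd' hstep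
      exact ⟨e', he', hreach.trans hreach'⟩
  have hU : ∀ b c, b ∈ U → b ≤ c → c ∈ U := by
    intro b c hb hbc hc
    obtain ⟨g, hg, hreach⟩ := hc
    obtain ⟨g', hg', hreach'⟩ := hsim b c g ((hle b c).2 hbc) hreach
    exact hb ⟨g', hG hg hg', hreach'⟩
  -- B = minimal elements of U
  set B : Set (Q × (Fin k → ℕ)) := {b ∈ U | ∀ y ∈ U, y ≤ b → y = b} with hBdef
  have hBU : B ⊆ U := fun b hb => hb.1
  refine ⟨B, ?_, ?_⟩
  · refine IsAntichain.finite_of_partiallyWellOrderedOn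
      (r := (· ≤ ·)) ?_ (hpwo.mono (Set.subset_univ _))
    intro a ha b hb hab h
    exact hab (hb.2 a ha.1 h)
  · ext c
    simp only [Set.mem_setOf_eq]
    constructor
    · intro hc
      have hT : Set.IsWF {x ∈ U | x ≤ c} :=
        (hpwo.isWF).mono (Set.subset_univ _)
      have hne : ({x ∈ U | x ≤ c}).Nonempty := ⟨c, hc, le_refl c⟩
      set b := hT.min hne with hb
      have hbmem := hT.min_mem hne
      refine ⟨b, ⟨hbmem.1, ?_⟩, (hle b c).2 hbmem.2⟩
      intro y hy hyb
      by_contra hne'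
      exact hT.not_lt_min hne ⟨hy, le_trans hyb hbmem.2⟩ (lt_of_le_of_ne hyb hne')
    · rintro ⟨b, hb, hbc⟩
      exact hU b c (hBU hb) ((hle b c).1 hbc)
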